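/- Let k be a strictly positive definite function on S, let S = S_1 ∪ ... ∪ S_t be a partition of S into disjoint subdomains, and let X̲ be a set of r distinct points in S (so that k(X̲,X̲) is invertible). Define k_h(x,x') = k(x,x') if x and x' lie in the same subdomain S_j, and k_h(x,x') = k(x,X̲) k(X̲,X̲)^{-1} k(X̲,x') otherwise. Then k_h is strictly positive definite on S. -/

import Mathlib

/-- The Gram matrix `k(X̲,X̲)` of a kernel `k` at the landmark points `u 0, …, u (r-1)`. -/
noncomputable def gramMatrix {S : Type*} (k : S → S → ℝ) {r : ℕ} (u : Fin r → S) :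
    Matrix (Fin r) (Fin r) ℝ :=
  Matrix.of fun a b => k (u a) (u b)

/-- The Nyström approximation `k(x,X̲) k(X̲,X̲)⁻¹ k(X̲,x')`. -/
noncomputable def nystrom {S : Type*} (k : S → S → ℝ) {r : ℕ} (u : Fin r → S)
    (x x' : S) : ℝ :=
  ∑ a, ∑ b, k x (u a) * (gramMatrix k u)⁻¹ a b * k (u b) x'

/-- A symmetric function `k : S × S → ℝ` is positive definite if every quadratic form
`∑ᵢⱼ αᵢ αⱼ k(xᵢ,xⱼ)` is nonnegative. -/
def IsPosDefKernel {S : Type*} (k : S → S → ℝ) : Prop :=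
  (∀ x x', k x x' = k x' x) ∧
  ∀ (n : ℕ) (x : Fin n → S) (α : Fin n → ℝ),
    0 ≤ ∑ i, ∑ j, α i * α j * k (x i) (x j)

/-- A symmetric function `k : S × S → ℝ` is strictly positive definite if every quadratic
form `∑ᵢⱼ αᵢ αⱼ k(xᵢ,xⱼ)` at distinct points with not-all-zero coefficients is positive. -/
def IsStrictPosDefKernel {S : Type*} (k : S → S → ℝ) : Prop :=
  (∀ x x', k x x' = k x' x) ∧
  ∀ (n : ℕ) (x : Fin n → S) (α : Fin n → ℝ),
    Function.Injective x → α ≠ 0 →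
      0 < ∑ i, ∑ j, α i * α j * k (x i) (x j)

private lemma sum_swap4 {ι₁ ι₂ ι₃ ι₄ : Type*} [Fintype ι₁] [Fintype ι₂] [Fintype ι₃] [Fintype ι₄]
    (F : ι₁ → ι₂ → ι₃ → ι₄ → ℝ) :
    ∑ i, ∑ l, ∑ a, ∑ b, F i l a b = ∑ a, ∑ b, ∑ i, ∑ l, F i l a b := by
  have h1 : ∀ i, (∑ l : ι₂, ∑ a : ι₃, ∑ b : ι₄, F i l a b)
      = ∑ a : ι₃, ∑ b : ι₄, ∑ l : ι₂, F i l a b := by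
    intro i
    rw [Finset.sum_comm]
    exact Finset.sum_congr rfl fun a _ => Finset.sum_comm
  simp_rw [h1]
  rw [Finset.sum_comm]
  exact Finset.sum_congr rfl fun a _ => Finset.sum_comm

private lemma nys_quad {S : Type*} (k : S → S → ℝ) {r : ℕ} (u : Fin r → S)
    {n : ℕ} (x : Fin n → S) (w : Fin n → ℝ) :
    ∑ i, ∑ l, w i * w l * nystrom k u (x i) (x l)
      = ∑ a, ∑ b, (∑ i, w i * k (x i) (u a)) * (gramMatrix k u)⁻¹ a b
          * (∑ l, w l * k (u b) (x l)) := by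
  calc ∑ i, ∑ l, w i * w l * nystrom k u (x i) (x l)
      = ∑ i, ∑ l, ∑ a, ∑ b,
          w i * w l * (k (x i) (u a) * (gramMatrix k u)⁻¹ a b * k (u b) (x l)) := by
        simp_rw [nystrom, Finset.mul_sum]
    _ = ∑ a, ∑ b, ∑ i, ∑ l,
          w i * w l * (k (x i) (u a) * (gramMatrix k u)⁻¹ a b * k (u b) (x l)) :=
        sum_swap4 _
    _ = _ := by
        refine Finset.sum_congr rfl fun a _ => Finset.sum_congr rfl fun b _ => ?_
        rw [Finset.sum_mul, Finset.sum_mul_sum]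
        exact Finset.sum_congr rfl fun i _ => Finset.sum_congr rfl fun l _ => by ring

open Classical in
private lemma quad_key {S : Type*} {k : S → S → ℝ} (hk : IsStrictPosDefKernel k)
    {ι : Type*} [Fintype ι] (x : ι → S) (α : ι → ℝ) :
    0 ≤ ∑ i, ∑ l, α i * α l * k (x i) (x l) ∧
    ((∑ i, ∑ l, α i * α l * k (x i) (x l)) = 0 →
      ∀ s : S, (∑ i, if x i = s then α i else 0) = 0) := by
  classical
  set T := Finset.image x Finset.univ with hT
  set m := Fintype.card ↥T with hm
  set e := Fintype.equivFin ↥T with he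
  set y : Fin m → S := fun j => (e.symm j : S) with hy
  have yinj : Function.Injective y := fun a b h => e.symm.injective (Subtype.ext h)
  have hmemT : ∀ i, x i ∈ T := fun i => Finset.mem_image_of_mem x (Finset.mem_univ i)
  set jof : ι → Fin m := fun i => e ⟨x i, hmemT i⟩ with hjof
  have hyjof : ∀ i, y (jof i) = x i := by
    intro i; simp [hy, hjof]
  have hiff : ∀ i j, x i = y j ↔ jof i = j := by
    intro i j
    constructor
    · intro h; apply yinj; rw [hyjof, h]
    · intro h; rw [← h, hyjof]
  set β : Fin m → ℝ := fun j => ∑ i, if jof i = j then α i else 0 with hβ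
  have key : ∀ (w : ι → ℝ) (c : Fin m → ℝ),
      (∑ i, w i * c (jof i)) = ∑ j, (∑ i, if jof i = j then w i else 0) * c j := by
    intro w c
    simp_rw [Finset.sum_mul, ite_mul, zero_mul]
    rw [Finset.sum_comm]
    refine Finset.sum_congr rfl fun i _ => ?_
    simp [Finset.sum_ite_eq]
  have step : ∑ i, ∑ l, α i * α l * k (x i) (x l)
      = ∑ j, ∑ j', β j * β j' * k (y j) (y j') := by
    have h1 : ∀ i, (∑ l, α i * α l * k (x i) (x l))
        = α i * ∑ j', β j' * k (x i) (y j') := by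
      intro i
      rw [Finset.mul_sum]
      have := key α (fun j' => k (x i) (y j'))
      calc ∑ l, α i * α l * k (x i) (x l)
          = ∑ l, α i * (α l * k (x i) (y (jof l))) := by
            refine Finset.sum_congr rfl fun l _ => by rw [hyjof]; ring
        _ = α i * ∑ l, α l * k (x i) (y (jof l)) := by rw [Finset.mul_sum]
        _ = α i * ∑ j', β j' * k (x i) (y j') := by rw [this]
        _ = ∑ j', α i * (β j' * k (x i) (y j')) := by rw [Finset.mul_sum]
    simp_rw [h1, Finset.mul_sum]
    conv_lhs => rw [Finset.sum_comm]
    conv_rhs => rw [Finset.sum_comm]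
    refine Finset.sum_congr rfl fun j' _ => ?_
    calc ∑ i, α i * (β j' * k (x i) (y j'))
        = ∑ i, α i * (β j' * k (y (jof i)) (y j')) := by
          refine Finset.sum_congr rfl fun i _ => by rw [hyjof]
      _ = ∑ i, α i * ((fun j => β j' * k (y j) (y j')) (jof i)) := rfl
      _ = ∑ j, (∑ i, if jof i = j then α i else 0) * (β j' * k (y j) (y j')) :=
          key α (fun j => β j' * k (y j) (y j'))
      _ = ∑ j, β j * β j' * k (y j) (y j') := by
          refine Finset.sum_congr rfl fun j _ => ?_
          have hb : (∑ i, if jof i = j then α i else 0) = β j := rfl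
          rw [hb]; ring
  by_cases hβ0 : β = 0
  · constructor
    · rw [step]; simp [hβ0]
    · intro _ s
      by_cases hs : ∃ i0, x i0 = s
      · obtain ⟨i0, hi0⟩ := hs
        subst hi0
        have hcond : ∀ i, (x i = x i0) ↔ (jof i = jof i0) := by
          intro i; rw [← hyjof i0]; exact hiff i (jof i0)
        simp_rw [hcond]
        exact congrFun hβ0 (jof i0)
      · push_neg at hs
        exact Finset.sum_eq_zero fun i _ => if_neg (hs i)
  · have hpos : 0 < ∑ j, ∑ j', β j * β j' * k (y j) (y j') :=
      hk.2 m y β yinj hβ0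
    rw [step]
    exact ⟨le_of_lt hpos, fun h => absurd h (ne_of_gt hpos)⟩

open Matrix in
private lemma gram_symm {S : Type*} {k : S → S → ℝ} (hsym : ∀ x x', k x x' = k x' x)
    {r : ℕ} (u : Fin r → S) : (gramMatrix k u)ᵀ = gramMatrix k u := by
  ext a b
  exact hsym (u b) (u a)

open Matrix in
private lemma gram_inv_symm {S : Type*} {k : S → S → ℝ} (hsym : ∀ x x', k x x' = k x' x)
    {r : ℕ} (u : Fin r → S) (a b : Fin r) :
    (gramMatrix k u)⁻¹ b a = (gramMatrix k u)⁻¹ a b := by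
  have h : ((gramMatrix k u)⁻¹)ᵀ = (gramMatrix k u)⁻¹ := by
    rw [Matrix.transpose_nonsing_inv, gram_symm hsym]
  exact congrFun (congrFun h a) b

private lemma nystrom_symm {S : Type*} {k : S → S → ℝ} (hsym : ∀ x x', k x x' = k x' x)
    {r : ℕ} (u : Fin r → S) (x x' : S) :
    nystrom k u x x' = nystrom k u x' x := by
  rw [nystrom, nystrom]
  conv_rhs => rw [Finset.sum_comm]
  refine Finset.sum_congr rfl fun a _ => Finset.sum_congr rfl fun b _ => ?_
  rw [gram_inv_symm hsym u b a, hsym x' (u b), hsym (u a) x]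
  ring

open Matrix in
private lemma gram_posDef {S : Type*} {k : S → S → ℝ} (hk : IsStrictPosDefKernel k)
    {r : ℕ} {u : Fin r → S} (hu : Function.Injective u) : (gramMatrix k u).PosDef := by
  rw [Matrix.posDef_iff_dotProduct_mulVec]
  constructor
  · show (gramMatrix k u)ᴴ = gramMatrix k u
    ext a b
    show star (gramMatrix k u b a) = gramMatrix k u a b
    rw [star_trivial]
    exact hk.1 (u b) (u a)
  · intro v hv
    have h := hk.2 r u v hu hv
    have heq : star v ⬝ᵥ (gramMatrix k u *ᵥ v) = ∑ a, ∑ b, v a * v b * k (u a) (u b) := by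
      simp only [dotProduct, Matrix.mulVec, star_trivial, Pi.star_apply, dotProduct,
        Finset.mul_sum]
      refine Finset.sum_congr rfl fun a _ => Finset.sum_congr rfl fun b _ => ?_
      show v a * (gramMatrix k u a b * v b) = _
      show v a * (k (u a) (u b) * v b) = _
      ring
    rw [heq]
    exact h



/-- if `k` is strictly positive definite, `S = S_1 ∪ ⋯ ∪ S_t` is a partition
into disjoint subdomains, `X̲` is a set of `r` distinct points (so that `k(X̲,X̲)` is
invertible), and `k_h(x,x') = k(x,x')` when `x, x'` lie in a common subdomain while
`k_h(x,x') = k(x,X̲) k(X̲,X̲)⁻¹ k(X̲,x')` otherwise, then `k_h` is strictly positive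
definite. -/
theorem oneLevel_strictPosDef {S : Type*} {t : ℕ} (k : S → S → ℝ)
    (hk : IsStrictPosDefKernel k)
    (P : Fin t → Set S)
    (hcover : ∀ x : S, ∃ j, x ∈ P j)
    (hdisj : ∀ j j' : Fin t, j ≠ j' → Disjoint (P j) (P j'))
    {r : ℕ} (u : Fin r → S) (hu : Function.Injective u)
    (kh : S → S → ℝ)
    (hkh_same : ∀ x x', (∃ j, x ∈ P j ∧ x' ∈ P j) → kh x x' = k x x')
    (hkh_diff : ∀ x x', (¬ ∃ j, x ∈ P j ∧ x' ∈ P j) → kh x x' = nystrom k u x x') :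
    IsStrictPosDefKernel kh := by
  classical
  have hsym := hk.1
  constructor
  · intro x x'
    by_cases h : ∃ j, x ∈ P j ∧ x' ∈ P j
    · obtain ⟨j, h1, h2⟩ := h
      rw [hkh_same x x' ⟨j, h1, h2⟩, hkh_same x' x ⟨j, h2, h1⟩]
      exact hsym x x'
    · have h' : ¬ ∃ j, x' ∈ P j ∧ x ∈ P j := fun ⟨j, h1, h2⟩ => h ⟨j, h2, h1⟩
      rw [hkh_diff x x' h, hkh_diff x' x h']
      exact nystrom_symm hsym u x x'
  · intro n x α hx hα
    set K := gramMatrix k u with hK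
    have hKpd : K.PosDef := gram_posDef hk hu
    have hKdet : IsUnit K.det := hKpd.det_pos.ne'.isUnit
    have hKinvpd : K⁻¹.PosDef := hKpd.inv
    have hjx : ∀ i, x i ∈ P (Classical.choose (hcover (x i))) :=
      fun i => Classical.choose_spec (hcover (x i))
    set jx : Fin n → Fin t := fun i => Classical.choose (hcover (x i)) with hjxdef
    have hsame_iff : ∀ i l, (∃ j, x i ∈ P j ∧ x l ∈ P j) ↔ jx i = jx l := by
      intro i l
      constructor
      · rintro ⟨j, h1, h2⟩
        have e1 : jx i = j := by
          by_contra hne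
          exact Set.disjoint_left.mp (hdisj _ _ hne) (hjx i) h1
        have e2 : jx l = j := by
          by_contra hne
          exact Set.disjoint_left.mp (hdisj _ _ hne) (hjx l) h2
        rw [e1, e2]
      · intro h
        exact ⟨jx i, hjx i, h ▸ hjx l⟩
    set αj : Fin t → Fin n → ℝ := fun j0 i => if jx i = j0 then α i else 0 with hαj
    set cj : Fin t → Fin r → ℝ := fun j0 a => ∑ i, αj j0 i * k (x i) (u a) with hcj
    set c : Fin r → ℝ := fun a => ∑ i, α i * k (x i) (u a) with hc
    set β : Fin t → Fin r → ℝ := fun j0 => -(K⁻¹.mulVec (cj j0)) with hβ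
    set z : Fin n ⊕ Fin r → S := Sum.elim x u with hz
    set γ : Fin t → (Fin n ⊕ Fin r) → ℝ := fun j0 => Sum.elim (αj j0) (β j0) with hγ
    set qf : (Fin r → ℝ) → ℝ := fun v => ∑ a, ∑ b, v a * K⁻¹ a b * v b with hqf
    -- basic facts about β
    have hval : ∀ j0 a, β j0 a = -∑ b, K⁻¹ a b * cj j0 b := by
      intro j0 a
      simp [hβ, Matrix.mulVec, dotProduct]
    have hKβ : ∀ j0, K.mulVec (β j0) = -(cj j0) := by
      intro j0
      have hb : β j0 = -(K⁻¹.mulVec (cj j0)) := rfl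
      rw [hb, Matrix.mulVec_neg, Matrix.mulVec_mulVec, Matrix.mul_nonsing_inv K hKdet,
        Matrix.one_mulVec]
    -- facts about qf
    have hqf_eq : ∀ v : Fin r → ℝ, dotProduct (star v) (K⁻¹.mulVec v) = qf v := by
      intro v
      simp only [dotProduct, Matrix.mulVec, star_trivial, Finset.mul_sum, hqf]
      refine Finset.sum_congr rfl fun a _ => Finset.sum_congr rfl fun b _ => by ring
    have hqf_nonneg : ∀ v, 0 ≤ qf v := by
      intro v
      rcases eq_or_ne v 0 with h | h
      · simp [hqf, h]
      · exact le_of_lt (by rw [← hqf_eq]; exact hKinvpd.dotProduct_mulVec_pos h)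
    have hqf_zero : ∀ v, qf v = 0 → v = 0 := by
      intro v h
      by_contra hne
      exact absurd h (ne_of_gt (by rw [← hqf_eq]; exact hKinvpd.dotProduct_mulVec_pos hne))
    -- nystrom quadratic form
    have hNq : ∀ w : Fin n → ℝ, ∑ i, ∑ l, w i * w l * nystrom k u (x i) (x l)
        = qf (fun a => ∑ i, w i * k (x i) (u a)) := by
      intro w
      rw [nys_quad]
      refine Finset.sum_congr rfl fun a _ => Finset.sum_congr rfl fun b _ => ?_
      congr 1
      exact Finset.sum_congr rfl fun l _ => by rw [hsym (u b) (x l)]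
    -- the residual quadratic forms
    set Qz : Fin t → ℝ := fun j0 => ∑ p, ∑ q, γ j0 p * γ j0 q * k (z p) (z q) with hQz
    have hQz_eq : ∀ j0, Qz j0
        = (∑ i, ∑ l, αj j0 i * αj j0 l * k (x i) (x l)) - qf (cj j0) := by
      intro j0
      have expand : Qz j0 =
          (∑ i, ∑ l, αj j0 i * αj j0 l * k (x i) (x l))
          + ((∑ i, ∑ b, αj j0 i * β j0 b * k (x i) (u b))
          + ((∑ a, ∑ l, β j0 a * αj j0 l * k (u a) (x l))
          + (∑ a, ∑ b, β j0 a * β j0 b * k (u a) (u b)))) := by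
        simp only [hQz, hγ, hz, Fintype.sum_sum_type, Sum.elim_inl, Sum.elim_inr,
          Finset.sum_add_distrib]
        ring
      have hA2 : ∑ i, ∑ b, αj j0 i * β j0 b * k (x i) (u b) = ∑ a, cj j0 a * β j0 a := by
        rw [Finset.sum_comm]
        refine Finset.sum_congr rfl fun b _ => ?_
        have hcb : cj j0 b = ∑ i, αj j0 i * k (x i) (u b) := rfl
        rw [hcb, Finset.sum_mul]
        exact Finset.sum_congr rfl fun i _ => by ring
      have hA3 : ∑ a, ∑ l, β j0 a * αj j0 l * k (u a) (x l) = ∑ a, cj j0 a * β j0 a := by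
        refine Finset.sum_congr rfl fun a _ => ?_
        have hca : cj j0 a = ∑ l, αj j0 l * k (x l) (u a) := rfl
        rw [hca, Finset.sum_mul]
        refine Finset.sum_congr rfl fun l _ => by rw [hsym (u a) (x l)]; ring
      have hA4 : ∑ a, ∑ b, β j0 a * β j0 b * k (u a) (u b) = -∑ a, cj j0 a * β j0 a := by
        have h1 : ∀ a, ∑ b, β j0 a * β j0 b * k (u a) (u b) = β j0 a * (K.mulVec (β j0) a) := by
          intro a
          have hm : K.mulVec (β j0) a = ∑ b, K a b * β j0 b := rfl
          rw [hm, Finset.mul_sum]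
          refine Finset.sum_congr rfl fun b _ => ?_
          have hkab : K a b = k (u a) (u b) := rfl
          rw [hkab]; ring
        simp_rw [h1, hKβ j0]
        rw [← Finset.sum_neg_distrib]
        refine Finset.sum_congr rfl fun a _ => ?_
        simp only [Pi.neg_apply]
        ring
      have hlast : ∑ a, cj j0 a * β j0 a = -qf (cj j0) := by
        calc ∑ a, cj j0 a * β j0 a
            = ∑ a, cj j0 a * (-∑ b, K⁻¹ a b * cj j0 b) := by
              exact Finset.sum_congr rfl fun a _ => by rw [hval j0 a]
          _ = -∑ a, ∑ b, cj j0 a * K⁻¹ a b * cj j0 b := by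
              rw [← Finset.sum_neg_distrib]
              refine Finset.sum_congr rfl fun a _ => ?_
              rw [mul_neg, Finset.mul_sum]
              congr 1
              exact Finset.sum_congr rfl fun b _ => by ring
          _ = -qf (cj j0) := rfl
      rw [expand, hA2, hA3, hA4, hlast]
      ring
    -- splitting kh
    have hkh_eq : ∀ i l, kh (x i) (x l)
        = nystrom k u (x i) (x l)
          + (if jx i = jx l then k (x i) (x l) - nystrom k u (x i) (x l) else 0) := by
      intro i l
      by_cases h : jx i = jx l
      · rw [if_pos h, hkh_same _ _ ((hsame_iff i l).2 h)]; ring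
      · rw [if_neg h, hkh_diff _ _ (fun hcon => h ((hsame_iff i l).1 hcon)), add_zero]
    have hsum_ite : ∀ i l, ∑ j0, αj j0 i * αj j0 l
        = if jx i = jx l then α i * α l else 0 := by
      intro i l
      by_cases h : jx i = jx l
      · rw [if_pos h]
        have hterm : ∀ j0, αj j0 i * αj j0 l = if jx i = j0 then α i * α l else 0 := by
          intro j0
          by_cases h0 : jx i = j0
          · have h0' : jx l = j0 := by rw [← h]; exact h0
            simp only [hαj]
            rw [if_pos h0, if_pos h0', if_pos h0]
          · have h0' : ¬ jx l = j0 := fun hcon => h0 (h.trans hcon)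
            simp only [hαj]
            rw [if_neg h0, if_neg h0', if_neg h0, mul_zero]
        simp_rw [hterm]
        simp [Finset.sum_ite_eq]
      · rw [if_neg h]
        refine Finset.sum_eq_zero fun j0 _ => ?_
        by_cases h1 : jx i = j0
        · have h2 : ¬ jx l = j0 := fun hcon => h (h1.trans hcon.symm)
          simp only [hαj]
          rw [if_neg h2, mul_zero]
        · simp only [hαj]
          rw [if_neg h1, zero_mul]
    -- main identity
    have step2 : ∑ i, ∑ l, α i * α l * kh (x i) (x l)
        = qf c + ∑ i, ∑ l, α i * α l
            * (if jx i = jx l then k (x i) (x l) - nystrom k u (x i) (x l) else 0) := by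
      simp_rw [hkh_eq, mul_add, Finset.sum_add_distrib]
      congr 1
      have hn := hNq α
      rw [← hc] at hn
      exact hn
    have step3 : ∑ i, ∑ l, α i * α l
          * (if jx i = jx l then k (x i) (x l) - nystrom k u (x i) (x l) else 0)
        = ∑ j0, ∑ i, ∑ l, αj j0 i * αj j0 l
            * (k (x i) (x l) - nystrom k u (x i) (x l)) := by
      have hswap : ∑ j0, ∑ i, ∑ l, αj j0 i * αj j0 l
            * (k (x i) (x l) - nystrom k u (x i) (x l))
          = ∑ i, ∑ l, ∑ j0, αj j0 i * αj j0 l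
            * (k (x i) (x l) - nystrom k u (x i) (x l)) := by
        rw [Finset.sum_comm]
        exact Finset.sum_congr rfl fun i _ => Finset.sum_comm
      rw [hswap]
      refine Finset.sum_congr rfl fun i _ => Finset.sum_congr rfl fun l _ => ?_
      rw [← Finset.sum_mul, hsum_ite i l]
      by_cases h : jx i = jx l <;> simp [h, mul_assoc]
    have main_id : ∑ i, ∑ l, α i * α l * kh (x i) (x l) = qf c + ∑ j0, Qz j0 := by
      rw [step2, step3]
      congr 1
      refine Finset.sum_congr rfl fun j0 _ => ?_
      have hD : ∑ i, ∑ l, αj j0 i * αj j0 l * (k (x i) (x l) - nystrom k u (x i) (x l))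
          = (∑ i, ∑ l, αj j0 i * αj j0 l * k (x i) (x l))
            - ∑ i, ∑ l, αj j0 i * αj j0 l * nystrom k u (x i) (x l) := by
        rw [← Finset.sum_sub_distrib]
        refine Finset.sum_congr rfl fun i _ => ?_
        rw [← Finset.sum_sub_distrib]
        exact Finset.sum_congr rfl fun l _ => by ring
      rw [hD, hNq (αj j0), hQz_eq j0]
    -- conclude
    by_contra hQpos
    push_neg at hQpos
    rw [main_id] at hQpos
    have hQz_nonneg : ∀ j0, 0 ≤ Qz j0 := fun j0 => (quad_key hk z (γ j0)).1
    have hsum_nonneg : 0 ≤ ∑ j0, Qz j0 := Finset.sum_nonneg fun j0 _ => hQz_nonneg j0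
    have hqfc0 : qf c = 0 := le_antisymm (by linarith) (hqf_nonneg c)
    have hQzsum0 : ∑ j0, Qz j0 = 0 :=
      le_antisymm (by linarith [hqf_nonneg c]) hsum_nonneg
    have hQz0 : ∀ j0, Qz j0 = 0 := by
      intro j0
      exact (Finset.sum_eq_zero_iff_of_nonneg (fun j0 _ => hQz_nonneg j0)).1 hQzsum0 j0
        (Finset.mem_univ _)
    have hc0 : c = 0 := hqf_zero c hqfc0
    have hfib : ∀ j0 s, (∑ p, if z p = s then γ j0 p else 0) = 0 :=
      fun j0 s => (quad_key hk z (γ j0)).2 (hQz0 j0) s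
    have hαsum : ∀ i0, ∑ j0, αj j0 i0 = α i0 := by
      intro i0
      simp only [hαj]
      rw [Finset.sum_ite_eq]
      simp
    have hαzero : ∀ i, α i = 0 := by
      intro i
      have hE : ∀ j0, αj j0 i + (∑ a, if u a = x i then β j0 a else 0) = 0 := by
        intro j0
        have h0 := hfib j0 (x i)
        rw [Fintype.sum_sum_type] at h0
        simp only [hz, hγ, Sum.elim_inl, Sum.elim_inr] at h0
        have h1 : ∑ i', (if x i' = x i then αj j0 i' else 0) = αj j0 i := by
          have hcond : ∀ i', (x i' = x i) = (i' = i) :=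
            fun i' => propext ⟨fun hh => hx hh, fun hh => hh ▸ rfl⟩
          simp_rw [hcond]
          rw [Finset.sum_ite_eq']
          simp
        rw [h1] at h0
        exact h0
      have hS : ∑ j0, (αj j0 i + ∑ a, if u a = x i then β j0 a else 0) = 0 :=
        Finset.sum_eq_zero fun j0 _ => hE j0
      rw [Finset.sum_add_distrib, hαsum i] at hS
      have h2 : ∑ j0, ∑ a, (if u a = x i then β j0 a else 0) = 0 := by
        rw [Finset.sum_comm]
        refine Finset.sum_eq_zero fun a _ => ?_
        by_cases ha : u a = x i
        · simp only [if_pos ha]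
          have hb1 : ∑ j0, β j0 a = -∑ j0, ∑ b, K⁻¹ a b * cj j0 b := by
            rw [← Finset.sum_neg_distrib]
            exact Finset.sum_congr rfl fun j0 _ => hval j0 a
          have hb2 : ∑ j0, ∑ b, K⁻¹ a b * cj j0 b = ∑ b, K⁻¹ a b * c b := by
            rw [Finset.sum_comm]
            refine Finset.sum_congr rfl fun b _ => ?_
            rw [← Finset.mul_sum]
            congr 1
            calc ∑ j0, cj j0 b = ∑ j0, ∑ i', αj j0 i' * k (x i') (u b) := rfl
              _ = ∑ i', (∑ j0, αj j0 i') * k (x i') (u b) := by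
                  rw [Finset.sum_comm]
                  exact Finset.sum_congr rfl fun i' _ => (Finset.sum_mul _ _ _).symm
              _ = ∑ i', α i' * k (x i') (u b) := by
                  refine Finset.sum_congr rfl fun i' _ => ?_
                  rw [hαsum i']
              _ = c b := rfl
          rw [hb1, hb2]
          simp [hc0]
        · simp only [if_neg ha]
          exact Finset.sum_eq_zero fun j0 _ => rfl
      rw [h2, add_zero] at hS
      exact hS
    exact hα (funext hαzero)
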